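/- In $\mathbb{Q}(x,y,z)$, with $\beta_1,\dots,\beta_{10}$ and $m_1,\dots,m_{10}$ as given, one has $\frac{1}{4}\sum_{i=1}^{10} m_i^4\,\beta_i = 4(-x-y+z)$. -/

import Mathlib

open MvPolynomial

private lemma ne_zero_of_eval {p : MvPolynomial (Fin 3) ℚ} (v : Fin 3 → ℚ)
    (h : eval v p ≠ 0) : p ≠ 0 := fun hp => h (by simp [hp])

private lemma futaki_assoc {K : Type*} [Field K] (a1 a2 a3 a4 a5 a6 a7 a8 a9 a10 D : K) :
    (a1 + (a2 + (a3 + (a4 + (a5 + (a6 + (a7 + (a8 + (a9 + a10))))))))) / D =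
      (a1 + a2 + a3 + a4 + a5 + a6 + a7 + a8 + a9 + a10) / D := by
  ring

private lemma futaki_final {K : Type*} [Field K] [CharZero K] (x y z : K) : 1 / 4 *
      (-((-x - y) ^ 4 * (y * (x - y) * (x - z) * (x - y + z))) + (-x - z) ^ 4 * (z * (x - y) * (x - z) * (x - y + z)) +
        -((x - z) ^ 4 * (y * z * (x - z) * (y - z))) +
        (-y + 2 * z) ^ 4 * (y * z * (x - y) * (x - y + z)) +
        (-x - y + 2 * z) ^ 4 * (y * (x - y) * (x - z) * (x - y + z)) +
        -(y ^ 4 * (x * y * z * (x - z))) +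
        (2 * x - y) ^ 4 * (x * y * (y - z) * (x - y + z)) +
        -((2 * x - y) ^ 4 * (y * (x - y) * (x - z) * (y - z))) +
        -((-x + 2 * y - z) ^ 4 * (z * (x - y) * (x - z) * (x - y + z))) +
        (-x + 2 * y - z) ^ 4 * (y * z * (x - z) * (y - z))) =
    4 * (-x - y + z) * (x * y * z * (x - y) * (x - z) * (y - z) * (x - y + z)) := by
  ring

set_option maxHeartbeats 1000000 in
/-- Generalized Futaki invariant of the toric blow-up: `¼ ∑ mᵢ⁴ βᵢ = 4(-x-y+z)`. -/
theorem toric_futaki_invariant :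
    let F := FractionRing (MvPolynomial (Fin 3) ℚ)
    let x : F := algebraMap (MvPolynomial (Fin 3) ℚ) F (X 0)
    let y : F := algebraMap (MvPolynomial (Fin 3) ℚ) F (X 1)
    let z : F := algebraMap (MvPolynomial (Fin 3) ℚ) F (X 2)
    let β : Fin 10 → F := ![
      -1 / (x * (y - z) * z),
      1 / (x * y * (y - z)),
      -1 / (x * (x - y) * (x - y + z)),
      1 / (x * (y - z) * (x - z)),
      1 / (x * (y - z) * z),
      -1 / ((x - y) * (y - z) * (x - y + z)),
      1 / ((x - y) * (x - z) * z),
      -1 / (x * z * (x - y + z)),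
      -1 / (x * y * (y - z)),
      1 / (x * (x - y) * (x - y + z))]
    let m : Fin 10 → F := ![
      -x - y, -x - z, x - z, -y + 2 * z, -x - y + 2 * z,
      y, 2 * x - y, 2 * x - y, -x + 2 * y - z, -x + 2 * y - z]
    (1 / 4 : F) * ∑ i : Fin 10, m i ^ 4 * β i = 4 * (-x - y + z) := by
  intro F x y z β m
  have inj := IsFractionRing.injective (MvPolynomial (Fin 3) ℚ) F
  have key : ∀ p : MvPolynomial (Fin 3) ℚ, p ≠ 0 →
      algebraMap (MvPolynomial (Fin 3) ℚ) F p ≠ 0 := fun p hp =>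
    (map_ne_zero_iff _ inj).mpr hp
  have hx : x ≠ 0 := key _ (ne_zero_of_eval ![1, 2, 4] (by simp))
  have hy : y ≠ 0 := key _ (ne_zero_of_eval ![1, 2, 4] (by simp))
  have hz : z ≠ 0 := key _ (ne_zero_of_eval ![1, 2, 4] (by simp))
  have hyz : y - z ≠ 0 := by
    have := key _ (ne_zero_of_eval (p := X 1 - X 2) ![1, 2, 4] (by simp; norm_num))
    simpa [y, z] using this
  have hxy : x - y ≠ 0 := by
    have := key _ (ne_zero_of_eval (p := X 0 - X 1) ![1, 2, 4] (by simp; norm_num))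
    simpa [x, y] using this
  have hxz : x - z ≠ 0 := by
    have := key _ (ne_zero_of_eval (p := X 0 - X 2) ![1, 2, 4] (by simp; norm_num))
    simpa [x, z] using this
  have hxyz : x - y + z ≠ 0 := by
    have := key _ (ne_zero_of_eval (p := X 0 - X 1 + X 2) ![1, 2, 4] (by simp; norm_num))
    simpa [x, y, z] using this
  set D : F := x * y * z * (x - y) * (x - z) * (y - z) * (x - y + z) with hDdef
  have hD : D ≠ 0 := by
    refine mul_ne_zero (mul_ne_zero (mul_ne_zero (mul_ne_zero (mul_ne_zero
      (mul_ne_zero hx hy) hz) hxy) hxz) hyz) hxyz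
  have e1 : (-x - y) ^ 4 * (-1 / (x * (y - z) * z)) =
      (-((-x - y) ^ 4 * (y * (x - y) * (x - z) * (x - y + z)))) / D := by
    rw [mul_div_assoc', div_eq_div_iff (mul_ne_zero (mul_ne_zero hx hyz) hz) hD, hDdef]; ring
  have e2 : (-x - z) ^ 4 * (1 / (x * y * (y - z))) =
      ((-x - z) ^ 4 * (z * (x - y) * (x - z) * (x - y + z))) / D := by
    rw [mul_div_assoc', div_eq_div_iff (mul_ne_zero (mul_ne_zero hx hy) hyz) hD, hDdef]; ring
  have e3 : (x - z) ^ 4 * (-1 / (x * (x - y) * (x - y + z))) =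
      (-((x - z) ^ 4 * (y * z * (x - z) * (y - z)))) / D := by
    rw [mul_div_assoc', div_eq_div_iff (mul_ne_zero (mul_ne_zero hx hxy) hxyz) hD, hDdef]; ring
  have e4 : (-y + 2 * z) ^ 4 * (1 / (x * (y - z) * (x - z))) =
      ((-y + 2 * z) ^ 4 * (y * z * (x - y) * (x - y + z))) / D := by
    rw [mul_div_assoc', div_eq_div_iff (mul_ne_zero (mul_ne_zero hx hyz) hxz) hD, hDdef]; ring
  have e5 : (-x - y + 2 * z) ^ 4 * (1 / (x * (y - z) * z)) =
      ((-x - y + 2 * z) ^ 4 * (y * (x - y) * (x - z) * (x - y + z))) / D := by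
    rw [mul_div_assoc', div_eq_div_iff (mul_ne_zero (mul_ne_zero hx hyz) hz) hD, hDdef]; ring
  have e6 : y ^ 4 * (-1 / ((x - y) * (y - z) * (x - y + z))) =
      (-(y ^ 4 * (x * y * z * (x - z)))) / D := by
    rw [mul_div_assoc', div_eq_div_iff (mul_ne_zero (mul_ne_zero hxy hyz) hxyz) hD, hDdef]; ring
  have e7 : (2 * x - y) ^ 4 * (1 / ((x - y) * (x - z) * z)) =
      ((2 * x - y) ^ 4 * (x * y * (y - z) * (x - y + z))) / D := by
    rw [mul_div_assoc', div_eq_div_iff (mul_ne_zero (mul_ne_zero hxy hxz) hz) hD, hDdef]; ring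
  have e8 : (2 * x - y) ^ 4 * (-1 / (x * z * (x - y + z))) =
      (-((2 * x - y) ^ 4 * (y * (x - y) * (x - z) * (y - z)))) / D := by
    rw [mul_div_assoc', div_eq_div_iff (mul_ne_zero (mul_ne_zero hx hz) hxyz) hD, hDdef]; ring
  have e9 : (-x + 2 * y - z) ^ 4 * (-1 / (x * y * (y - z))) =
      (-((-x + 2 * y - z) ^ 4 * (z * (x - y) * (x - z) * (x - y + z)))) / D := by
    rw [mul_div_assoc', div_eq_div_iff (mul_ne_zero (mul_ne_zero hx hy) hyz) hD, hDdef]; ring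
  have e10 : (-x + 2 * y - z) ^ 4 * (1 / (x * (x - y) * (x - y + z))) =
      ((-x + 2 * y - z) ^ 4 * (y * z * (x - z) * (y - z))) / D := by
    rw [mul_div_assoc', div_eq_div_iff (mul_ne_zero (mul_ne_zero hx hxy) hxyz) hD, hDdef]; ring
  have hsum : ∑ i : Fin 10, m i ^ 4 * β i =
      ((-((-x - y) ^ 4 * (y * (x - y) * (x - z) * (x - y + z)))) +
       ((-x - z) ^ 4 * (z * (x - y) * (x - z) * (x - y + z))) +
       (-((x - z) ^ 4 * (y * z * (x - z) * (y - z)))) +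
       ((-y + 2 * z) ^ 4 * (y * z * (x - y) * (x - y + z))) +
       ((-x - y + 2 * z) ^ 4 * (y * (x - y) * (x - z) * (x - y + z))) +
       (-(y ^ 4 * (x * y * z * (x - z)))) +
       ((2 * x - y) ^ 4 * (x * y * (y - z) * (x - y + z))) +
       (-((2 * x - y) ^ 4 * (y * (x - y) * (x - z) * (y - z)))) +
       (-((-x + 2 * y - z) ^ 4 * (z * (x - y) * (x - z) * (x - y + z)))) +
       ((-x + 2 * y - z) ^ 4 * (y * z * (x - z) * (y - z)))) / D := by
    rw [Fin.sum_univ_succ, Fin.sum_univ_succ, Fin.sum_univ_succ, Fin.sum_univ_succ,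
      Fin.sum_univ_succ, Fin.sum_univ_succ, Fin.sum_univ_succ, Fin.sum_univ_succ,
      Fin.sum_univ_succ, Fin.sum_univ_succ, Fin.sum_univ_zero]
    show (-x - y) ^ 4 * (-1 / (x * (y - z) * z)) +
      ((-x - z) ^ 4 * (1 / (x * y * (y - z))) +
      ((x - z) ^ 4 * (-1 / (x * (x - y) * (x - y + z))) +
      ((-y + 2 * z) ^ 4 * (1 / (x * (y - z) * (x - z))) +
      ((-x - y + 2 * z) ^ 4 * (1 / (x * (y - z) * z)) +
      (y ^ 4 * (-1 / ((x - y) * (y - z) * (x - y + z))) +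
      ((2 * x - y) ^ 4 * (1 / ((x - y) * (x - z) * z)) +
      ((2 * x - y) ^ 4 * (-1 / (x * z * (x - y + z))) +
      ((-x + 2 * y - z) ^ 4 * (-1 / (x * y * (y - z))) +
      ((-x + 2 * y - z) ^ 4 * (1 / (x * (x - y) * (x - y + z))) + 0))))))))) = _
    rw [e1, e2, e3, e4, e5, e6, e7, e8, e9, e10]
    rw [add_zero, ← add_div, ← add_div, ← add_div, ← add_div, ← add_div, ← add_div,
      ← add_div, ← add_div, ← add_div]
    exact futaki_assoc _ _ _ _ _ _ _ _ _ _ D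
  rw [hsum, mul_div_assoc', div_eq_iff hD, hDdef]
  exact futaki_final x y z
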